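/- Let u ≥ 1 and k ≥ 1 be integers and let X be a finite set of positive integers all at most u. Then X admits a (k, Δ)-halver with Δ = √(2·k·ln(2·(k+1)·(k·u+1))). In fact, the halver can be chosen so that for every subset S ⊆ X with |S| ≤ k there exists Ŝ ⊆ X with |Ŝ| = |S|, SUM(Ŝ) = SUM(S), and |Ŝ ∩ X'|, |Ŝ ∩ X''| ≤ |Ŝ|/2 + Δ. -/

import Mathlib

/-- `SUM S` is the sum of the elements of the finite set `S`. -/
def SUM (S : Finset ℕ) : ℕ := S.sum id

/-- MGF identity: sum over all subsets of `X` of `r ^ |T ∩ A|`. -/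
lemma mgf_sum (X T : Finset ℕ) (hT : T ⊆ X) (r : ℝ) :
    ∑ A ∈ X.powerset, r ^ (T ∩ A).card = (r + 1) ^ T.card * 2 ^ (X \ T).card := by
  classical
  have h := Finset.prod_add (fun x => if x ∈ T then r else 1) (fun _ => (1 : ℝ)) X
  simp only [Finset.prod_const_one, mul_one] at h
  have hL : ∏ x ∈ X, ((if x ∈ T then r else 1) + 1)
      = (r + 1) ^ T.card * 2 ^ (X \ T).card := by
    rw [← Finset.prod_sdiff hT]
    have e1 : ∏ x ∈ X \ T, ((if x ∈ T then r else 1) + 1) = 2 ^ (X \ T).card := by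
      rw [Finset.prod_congr rfl fun x hx => by rw [if_neg (Finset.mem_sdiff.1 hx).2]]
      norm_num [Finset.prod_const]
    have e2 : ∏ x ∈ T, ((if x ∈ T then r else 1) + 1) = (r + 1) ^ T.card := by
      rw [Finset.prod_congr rfl fun x hx => by rw [if_pos hx]]
      exact Finset.prod_const _
    rw [e1, e2, mul_comm]
  have hR : ∀ A ∈ X.powerset, (∏ x ∈ A, (if x ∈ T then r else 1)) = r ^ (T ∩ A).card := by
    intro A _
    rw [Finset.prod_ite_mem A T (fun _ => r), Finset.prod_const, Finset.inter_comm]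
  rw [Finset.sum_congr rfl hR] at h
  rw [← h, hL]


lemma tail_count (X T : Finset ℕ) (hT : T ⊆ X) (F : Finset (Finset ℕ)) (hF : F ⊆ X.powerset)
    (s a : ℝ) (h : ∀ A ∈ F, s * a ≤ s * ((T ∩ A).card : ℝ)) :
    (F.card : ℝ) * Real.exp (s * a) ≤ (Real.exp s + 1) ^ T.card * 2 ^ (X \ T).card := by
  classical
  have step1 : F.card • Real.exp (s * a) ≤ ∑ A ∈ F, (Real.exp s) ^ (T ∩ A).card := by
    refine Finset.card_nsmul_le_sum F _ _ (fun A hA => ?_)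
    rw [← Real.exp_nat_mul]
    exact Real.exp_le_exp.2 (by rw [mul_comm ((T ∩ A).card : ℝ) s]; exact h A hA)
  have step2 : ∑ A ∈ F, (Real.exp s) ^ (T ∩ A).card
      ≤ ∑ A ∈ X.powerset, (Real.exp s) ^ (T ∩ A).card :=
    Finset.sum_le_sum_of_subset_of_nonneg hF (fun A _ _ => by positivity)
  rw [nsmul_eq_mul] at step1
  calc (F.card : ℝ) * Real.exp (s * a) ≤ _ := step1
    _ ≤ _ := step2
    _ = _ := mgf_sum X T hT _

lemma exp_add_one_le (x : ℝ) : Real.exp x + 1 ≤ 2 * Real.exp (x/2 + x^2/8) := by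
  have hc : Real.cosh (x/2) ≤ Real.exp ((x/2)^2/2) := Real.cosh_le_exp_half_sq _
  have h1 : Real.exp (x/2) * Real.exp (x/2) = Real.exp x := by rw [← Real.exp_add]; ring_nf
  have h2 : Real.exp (x/2) * Real.exp (-(x/2)) = 1 := by rw [← Real.exp_add]; simp
  have hcosh : Real.cosh (x/2) = (Real.exp (x/2) + Real.exp (-(x/2))) / 2 := Real.cosh_eq _
  have hp : 0 < Real.exp (x/2) := Real.exp_pos _
  have heq : (x/2)^2/2 = x^2/8 := by ring
  rw [heq] at hc
  rw [Real.exp_add]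
  have hsum : Real.exp (x/2) + Real.exp (-(x/2)) ≤ 2 * Real.exp (x^2/8) := by
    rw [hcosh] at hc; linarith
  have hm := mul_le_mul_of_nonneg_left hsum hp.le
  nlinarith [hm, h1, h2]

lemma side_bound (c d n k : ℕ) (hcd : (2:ℝ)^c * 2^d = 2^n) (hc : c ≤ k) (hk : 1 ≤ k)
    (t s a : ℝ) (ht : 0 ≤ t) (hsq : s^2 = (4*t/k)^2)
    (hval : (c:ℝ)*(s/2) - s*a = -((4*t/k)*t)) :
    (Real.exp s + 1)^c * 2^d * Real.exp (-(s*a)) ≤ 2^n * Real.exp (-2*t^2/k) := by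
  have hkR : (0:ℝ) < k := by exact_mod_cast Nat.lt_of_lt_of_le Nat.zero_lt_one hk
  have key : (Real.exp s + 1)^c ≤ 2^c * Real.exp ((c:ℝ)*(s/2) + (c:ℝ)*s^2/8) := by
    calc (Real.exp s + 1)^c ≤ (2 * Real.exp (s/2 + s^2/8))^c :=
          pow_le_pow_left₀ (by positivity) (exp_add_one_le s) c
      _ = 2^c * (Real.exp (s/2 + s^2/8))^c := by rw [mul_pow]
      _ = 2^c * Real.exp ((c:ℝ) * (s/2 + s^2/8)) := by rw [← Real.exp_nat_mul]
      _ = 2^c * Real.exp ((c:ℝ)*(s/2) + (c:ℝ)*s^2/8) := by congr 1; ring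
  calc (Real.exp s + 1)^c * 2^d * Real.exp (-(s*a))
      ≤ (2^c * Real.exp ((c:ℝ)*(s/2) + (c:ℝ)*s^2/8)) * 2^d * Real.exp (-(s*a)) := by
        have h2d : (0:ℝ) ≤ 2^d := by positivity
        have he : (0:ℝ) ≤ Real.exp (-(s*a)) := (Real.exp_pos _).le
        exact mul_le_mul_of_nonneg_right (mul_le_mul_of_nonneg_right key h2d) he
    _ = 2^n * Real.exp (((c:ℝ)*(s/2) + (c:ℝ)*s^2/8) + -(s*a)) := by
        simp only [Real.exp_add]; rw [← hcd]; ring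
    _ = 2^n * Real.exp (-((4*t/k)*t) + (c:ℝ)*(4*t/k)^2/8) := by
        have harg : (c:ℝ)*(s/2) + (c:ℝ)*s^2/8 + -(s*a) = -((4*t/(k:ℝ))*t) + (c:ℝ)*s^2/8 := by
          linarith [hval]
        rw [harg, hsq]
    _ ≤ 2^n * Real.exp (-((4*t/k)*t) + (k:ℝ)*(4*t/k)^2/8) := by
        have : (c:ℝ) ≤ (k:ℝ) := by exact_mod_cast hc
        have hmono : -((4*t/k)*t) + (c:ℝ)*(4*t/k)^2/8 ≤ -((4*t/k)*t) + (k:ℝ)*(4*t/k)^2/8 := by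
          nlinarith [sq_nonneg (4*t/k)]
        have h2n : (0:ℝ) ≤ 2^n := by positivity
        exact mul_le_mul_of_nonneg_left (Real.exp_le_exp.2 hmono) h2n
    _ = 2^n * Real.exp (-2*t^2/k) := by
        congr 1
        field_simp
        ring

lemma bad_count (X T : Finset ℕ) (hT : T ⊆ X) (k : ℕ) (hk : 1 ≤ k) (hck : T.card ≤ k)
    (t : ℝ) (ht : 0 ≤ t) (F : Finset (Finset ℕ)) (hF : F ⊆ X.powerset)
    (h : ∀ A ∈ F, ¬(((T ∩ A).card : ℝ) ≤ (T.card : ℝ)/2 + t ∧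
        (T.card : ℝ)/2 - t ≤ ((T ∩ A).card : ℝ))) :
    (F.card : ℝ) ≤ 2 * 2 ^ X.card * Real.exp (-2 * t^2 / k) := by
  classical
  have hkR : (0:ℝ) < k := by exact_mod_cast Nat.lt_of_lt_of_le Nat.zero_lt_one hk
  set lam : ℝ := 4 * t / k with hlam_def
  have hlam : 0 ≤ lam := by positivity
  have hcd : (2:ℝ)^T.card * 2^(X \ T).card = 2^X.card := by
    rw [← pow_add]; congr 1
    have h1 := Finset.card_sdiff_of_subset hT
    have h2 := Finset.card_le_card hT
    omega
  set F1 := F.filter (fun A => ((T.card : ℝ))/2 + t < ((T ∩ A).card : ℝ)) with hF1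
  set F2 := F.filter (fun A => ¬(((T.card : ℝ))/2 + t < ((T ∩ A).card : ℝ))) with hF2
  have hsplit : F = F1 ∪ F2 := (Finset.filter_union_filter_not_eq _ F).symm
  have hcard : (F.card : ℝ) ≤ (F1.card : ℝ) + (F2.card : ℝ) := by
    rw [hsplit]; exact_mod_cast Finset.card_union_le F1 F2
  -- F1 bound
  have t1 : (F1.card : ℝ) ≤ 2^X.card * Real.exp (-2*t^2/k) := by
    have h1 : ∀ A ∈ F1, lam * ((T.card:ℝ)/2 + t) ≤ lam * ((T ∩ A).card : ℝ) := fun A hA =>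
      mul_le_mul_of_nonneg_left (le_of_lt (Finset.mem_filter.1 hA).2) hlam
    have tc := tail_count X T hT F1 ((Finset.filter_subset _ _).trans hF) lam _ h1
    have step := mul_le_mul_of_nonneg_right tc (Real.exp_pos (-(lam*((T.card:ℝ)/2+t)))).le
    rw [mul_assoc, ← Real.exp_add, add_neg_cancel, Real.exp_zero, mul_one] at step
    refine step.trans ?_
    refine side_bound T.card (X \ T).card X.card k hcd hck hk t lam _ ht rfl ?_
    rw [hlam_def]; ring
  -- F2 bound
  have t2 : (F2.card : ℝ) ≤ 2^X.card * Real.exp (-2*t^2/k) := by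
    have h2 : ∀ A ∈ F2, (-lam) * ((T.card:ℝ)/2 - t) ≤ (-lam) * ((T ∩ A).card : ℝ) := by
      intro A hA
      obtain ⟨hAF, hnot⟩ := Finset.mem_filter.1 hA
      have hlow : ((T ∩ A).card : ℝ) < (T.card:ℝ)/2 - t := by
        by_contra hcon
        push_neg at hcon
        push_neg at hnot
        exact h A hAF ⟨hnot, hcon⟩
      nlinarith [hlam, hlow]
    have tc := tail_count X T hT F2 ((Finset.filter_subset _ _).trans hF) (-lam) _ h2
    have step := mul_le_mul_of_nonneg_right tc (Real.exp_pos (-((-lam)*((T.card:ℝ)/2-t)))).le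
    rw [mul_assoc, ← Real.exp_add, add_neg_cancel, Real.exp_zero, mul_one] at step
    refine step.trans ?_
    refine side_bound T.card (X \ T).card X.card k hcd hck hk t (-lam) _ ht (by ring) ?_
    rw [hlam_def]; ring
  calc (F.card : ℝ) ≤ (F1.card : ℝ) + (F2.card : ℝ) := hcard
    _ ≤ 2 * 2^X.card * Real.exp (-2*t^2/k) := by linarith

noncomputable def halverRep (X : Finset ℕ) (k : ℕ) (p : ℕ × ℕ) : Finset ℕ :=
  if h : ∃ T, T ⊆ X ∧ T.card ≤ k ∧ (T.card, SUM T) = p then h.choose else ∅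

lemma halverRep_spec {X : Finset ℕ} {k : ℕ} {p : ℕ × ℕ}
    (h : ∃ T, T ⊆ X ∧ T.card ≤ k ∧ (T.card, SUM T) = p) :
    halverRep X k p ⊆ X ∧ (halverRep X k p).card ≤ k ∧
      (halverRep X k p).card = p.1 ∧ SUM (halverRep X k p) = p.2 := by
  rw [halverRep, dif_pos h]
  obtain ⟨h1, h2, h3⟩ := h.choose_spec
  exact ⟨h1, h2, (Prod.ext_iff.1 h3).1, (Prod.ext_iff.1 h3).2⟩

theorem stmt_3 (u k : ℕ) (hu : 1 ≤ u) (hk : 1 ≤ k) (X : Finset ℕ)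
    (hX : ∀ x ∈ X, x ∈ Finset.Icc 1 u) :
    ∃ X' X'' : Finset ℕ, X' ∪ X'' = X ∧ Disjoint X' X'' ∧
      ∀ S ⊆ X, S.card ≤ k →
        ∃ Shat ⊆ X, Shat.card = S.card ∧ SUM Shat = SUM S ∧
          ((Shat ∩ X').card : ℝ) ≤ (Shat.card : ℝ) / 2 +
              Real.sqrt (2 * (k : ℝ) * Real.log (2 * ((k : ℝ) + 1) * ((k : ℝ) * (u : ℝ) + 1))) ∧
          ((Shat ∩ X'').card : ℝ) ≤ (Shat.card : ℝ) / 2 +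
              Real.sqrt (2 * (k : ℝ) * Real.log (2 * ((k : ℝ) + 1) * ((k : ℝ) * (u : ℝ) + 1))) := by
  classical
  set M : ℝ := 2 * ((k : ℝ) + 1) * ((k : ℝ) * (u : ℝ) + 1) with hM_def
  set Δ : ℝ := Real.sqrt (2 * (k : ℝ) * Real.log M) with hΔ_def
  have hkR : (1:ℝ) ≤ (k:ℝ) := by exact_mod_cast hk
  have huR : (1:ℝ) ≤ (u:ℝ) := by exact_mod_cast hu
  have hk0 : (0:ℝ) < (k:ℝ) := by linarith
  have hku : (1:ℝ) ≤ (k:ℝ) * (u:ℝ) := by nlinarith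
  have hM8 : (8:ℝ) ≤ M := by rw [hM_def]; nlinarith
  have hM1 : (1:ℝ) < M := by linarith
  have hlog : 0 < Real.log M := Real.log_pos hM1
  have hΔ0 : 0 ≤ Δ := Real.sqrt_nonneg _
  have hΔsq : Δ^2 = 2 * (k:ℝ) * Real.log M := Real.sq_sqrt (by positivity)
  -- the class index set
  set P : Finset (ℕ × ℕ) :=
    (X.powerset.filter fun S => S.card ≤ k).image fun S => (S.card, SUM S) with hP_def
  have hPmem : ∀ p ∈ P, ∃ T, T ⊆ X ∧ T.card ≤ k ∧ (T.card, SUM T) = p := by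
    intro p hp
    obtain ⟨S, hS, rfl⟩ := Finset.mem_image.1 hp
    obtain ⟨hS1, hS2⟩ := Finset.mem_filter.1 hS
    exact ⟨S, Finset.mem_powerset.1 hS1, hS2, rfl⟩
  have hPcard : P.card ≤ (k + 1) * (k * u + 1) := by
    have hsub : P ⊆ Finset.range (k+1) ×ˢ Finset.range (k*u+1) := by
      intro p hp
      obtain ⟨S, hS, rfl⟩ := Finset.mem_image.1 hp
      obtain ⟨hS1, hS2⟩ := Finset.mem_filter.1 hS
      have hSX := Finset.mem_powerset.1 hS1
      have hsum : SUM S ≤ S.card * u := by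
        have := Finset.sum_le_card_nsmul S id u
          (fun x hx => (Finset.mem_Icc.1 (hX x (hSX hx))).2)
        simpa [SUM, smul_eq_mul] using this
      refine Finset.mem_product.2 ⟨Finset.mem_range.2 ?_, Finset.mem_range.2 ?_⟩
      · omega
      · have : S.card * u ≤ k * u := Nat.mul_le_mul_right u hS2
        omega
    calc P.card ≤ _ := Finset.card_le_card hsub
      _ = (k+1) * (k*u+1) := by rw [Finset.card_product, Finset.card_range, Finset.card_range]
  -- bad sets
  set Bad : Finset ℕ → Finset (Finset ℕ) := fun T =>
    X.powerset.filter fun A => ¬(((T ∩ A).card : ℝ) ≤ (T.card : ℝ)/2 + Δ ∧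
      (T.card : ℝ)/2 - Δ ≤ ((T ∩ A).card : ℝ)) with hBad_def
  set BadAll : Finset (Finset ℕ) := P.biUnion (fun p => Bad (halverRep X k p)) with hBadAll_def
  -- counting
  have hexp : Real.exp (-2 * Δ^2 / k) = (M^4)⁻¹ := by
    have h1 : -2 * Δ^2 / (k:ℝ) = -(4 * Real.log M) := by
      rw [hΔsq]; field_simp; ring
    rw [h1, Real.exp_neg]
    congr 1
    rw [show (4:ℝ) * Real.log M = Real.log (M^4) by rw [Real.log_pow]; norm_num,
      Real.exp_log (by positivity)]
  have hBadcard : (BadAll.card : ℝ) < (2:ℝ) ^ X.card := by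
    have hle : (BadAll.card : ℝ) ≤ ∑ p ∈ P, ((Bad (halverRep X k p)).card : ℝ) := by
      rw [hBadAll_def]
      exact_mod_cast (Nat.cast_le.2 (Finset.card_biUnion_le)).trans
        (le_of_eq (Nat.cast_sum _ _))
    have hterm : ∀ p ∈ P, ((Bad (halverRep X k p)).card : ℝ)
        ≤ 2 * 2 ^ X.card * Real.exp (-2 * Δ^2 / k) := by
      intro p hp
      obtain ⟨hr1, hr2, _, _⟩ := halverRep_spec (hPmem p hp)
      exact bad_count X _ hr1 k hk hr2 Δ hΔ0 _ (Finset.filter_subset _ _)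
        (fun A hA => (Finset.mem_filter.1 hA).2)
    have hsum : ∑ p ∈ P, ((Bad (halverRep X k p)).card : ℝ)
        ≤ (P.card : ℝ) * (2 * 2 ^ X.card * Real.exp (-2 * Δ^2 / k)) := by
      have := Finset.sum_le_card_nsmul P _ _ hterm
      simpa [nsmul_eq_mul] using this
    have hPR : (P.card : ℝ) ≤ ((k:ℝ) + 1) * ((k:ℝ) * (u:ℝ) + 1) := by
      calc (P.card : ℝ) ≤ (((k+1) * (k*u+1) : ℕ) : ℝ) := by exact_mod_cast hPcard
        _ = ((k:ℝ)+1) * ((k:ℝ)*(u:ℝ)+1) := by push_cast; ring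
    have hfinal : (P.card : ℝ) * (2 * 2 ^ X.card * Real.exp (-2 * Δ^2 / k))
        < (2:ℝ) ^ X.card := by
      rw [hexp]
      have h2n : (0:ℝ) < 2 ^ X.card := by positivity
      have hQ : ((k:ℝ)+1) * ((k:ℝ)*(u:ℝ)+1) = M / 2 := by rw [hM_def]; ring
      have hstep : (P.card : ℝ) * (2 * 2 ^ X.card * (M^4)⁻¹)
          ≤ (M/2) * (2 * 2 ^ X.card * (M^4)⁻¹) := by
        have hpos : (0:ℝ) ≤ 2 * 2 ^ X.card * (M^4)⁻¹ := by positivity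
        exact mul_le_mul_of_nonneg_right (hPR.trans_eq hQ) hpos
      refine hstep.trans_lt ?_
      have hMpos : (0:ℝ) < M := by linarith
      have hkey : (M/2) * (2 * 2 ^ X.card * (M^4)⁻¹) = 2 ^ X.card * (M^3)⁻¹ := by
        field_simp
      rw [hkey]
      have hM3 : (1:ℝ) < M^3 := one_lt_pow₀ hM1 (by norm_num)
      calc (2:ℝ) ^ X.card * (M^3)⁻¹ < 2 ^ X.card * 1 := by
            have : (M^3)⁻¹ < 1 := by
              rw [inv_lt_one_iff₀]; right; exact hM3
            exact (mul_lt_mul_iff_right₀ h2n).2 this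
        _ = 2 ^ X.card := mul_one _
    exact lt_of_le_of_lt (hle.trans hsum) hfinal
  -- choose a good A
  have hA : ∃ A ∈ X.powerset, A ∉ BadAll := by
    by_contra hcon
    push_neg at hcon
    have hsub : X.powerset ⊆ BadAll := fun A hA => hcon A hA
    have := Finset.card_le_card hsub
    rw [Finset.card_powerset] at this
    have : ((2:ℝ) ^ X.card) ≤ (BadAll.card : ℝ) := by exact_mod_cast this
    linarith
  obtain ⟨A, hApow, hAgood⟩ := hA
  have hAX : A ⊆ X := Finset.mem_powerset.1 hApow
  refine ⟨A, X \ A, Finset.union_sdiff_of_subset hAX, Finset.disjoint_sdiff, ?_⟩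
  intro S hS hSk
  have hex : ∃ T, T ⊆ X ∧ T.card ≤ k ∧ (T.card, SUM T) = (S.card, SUM S) := ⟨S, hS, hSk, rfl⟩
  obtain ⟨hr1, hr2, hr3, hr4⟩ := halverRep_spec hex
  set R := halverRep X k (S.card, SUM S) with hR_def
  have hpP : (S.card, SUM S) ∈ P := Finset.mem_image.2
    ⟨S, Finset.mem_filter.2 ⟨Finset.mem_powerset.2 hS, hSk⟩, rfl⟩
  have hnotbad : A ∉ Bad R := fun hbad =>
    hAgood (Finset.mem_biUnion.2 ⟨(S.card, SUM S), hpP, hbad⟩)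
  have hgood : ((R ∩ A).card : ℝ) ≤ (R.card : ℝ)/2 + Δ ∧
      (R.card : ℝ)/2 - Δ ≤ ((R ∩ A).card : ℝ) := by
    by_contra hcon
    exact hnotbad (Finset.mem_filter.2 ⟨hApow, hcon⟩)
  refine ⟨R, hr1, hr3, hr4, hgood.1, ?_⟩
  have hinter : R ∩ (X \ A) = R \ A := by
    rw [← Finset.inter_sdiff_assoc, Finset.inter_eq_left.2 hr1]
  have hcards : (R ∩ A).card + (R \ A).card = R.card := Finset.card_inter_add_card_sdiff R A
  have hcardsR : ((R \ A).card : ℝ) = (R.card : ℝ) - ((R ∩ A).card : ℝ) := by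
    have := hcards; push_cast [← this]; ring
  rw [hinter, hcardsR]
  linarith [hgood.2]
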